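/- Let A, B, L be K×K complex matrices, T ≥ 0 a real number, and define the superoperators 𝓛_A(ρ) = Aρ − ρA + T·(L ρ L† − (1/2) L†L ρ − (1/2) ρ L†L) and 𝓛_B(ρ) = Bρ − ρB on K×K complex matrices. Given a K×K matrix ρ₀, define superoperators Q_n by Q₀ = I, Q₁ = 𝓛_A, Q_{n+1} = 𝓛_A ∘ Q_n + n 𝓛_B ∘ Q_{n-1} for n ≥ 1, and set ρ_n = (1/n!) Q_n(ρ₀). Then the series Σ_{n≥0} ρ_n sⁿ converges absolutely for every s ∈ ℂ (with respect to the Hilbert–Schmidt norm), and the function ρ(s) = Σ_{n≥0} ρ_n sⁿ defined for real s is differentiable and satisfies dρ/ds = 𝓛_A(ρ(s)) + s·𝓛_B(ρ(s)) with ρ(0) = ρ₀. -/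

import Mathlib

open Matrix

attribute [local instance] Matrix.frobeniusSeminormedAddCommGroup
  Matrix.frobeniusNormedAddCommGroup Matrix.frobeniusNormedSpace

/-- The Lindbladian superoperator `𝓛_A(ρ) = [A, ρ] + T (L ρ L† − ½ L†L ρ − ½ ρ L†L)`. -/
noncomputable def lindbladA {K : ℕ} (A L : Matrix (Fin K) (Fin K) ℂ) (T : ℝ) :
    Matrix (Fin K) (Fin K) ℂ →ₗ[ℂ] Matrix (Fin K) (Fin K) ℂ :=
  LinearMap.mulLeft ℂ A - LinearMap.mulRight ℂ A +
    (T : ℂ) • ((LinearMap.mulRight ℂ Lᴴ).comp (LinearMap.mulLeft ℂ L)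
      - (2 : ℂ)⁻¹ • LinearMap.mulLeft ℂ (Lᴴ * L)
      - (2 : ℂ)⁻¹ • LinearMap.mulRight ℂ (Lᴴ * L))

/-- The commutator superoperator `𝓛_B(ρ) = [B, ρ]`. -/
noncomputable def lindbladB {K : ℕ} (B : Matrix (Fin K) (Fin K) ℂ) :
    Matrix (Fin K) (Fin K) ℂ →ₗ[ℂ] Matrix (Fin K) (Fin K) ℂ :=
  LinearMap.mulLeft ℂ B - LinearMap.mulRight ℂ B

lemma aux_sum (q : ℝ) (hq : 0 ≤ q) :
    Summable (fun n : ℕ => ((n : ℝ) + 1) * q ^ n / Real.sqrt n.factorial) := by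
  apply summable_of_ratio_norm_eventually_le (r := 1/2) (by norm_num)
  filter_upwards [Filter.eventually_ge_atTop ⌈16 * q ^ 2⌉₊] with n hn
  have hfac : (0:ℝ) < Real.sqrt n.factorial :=
    Real.sqrt_pos.2 (by exact_mod_cast n.factorial_pos)
  have hterm : (0:ℝ) ≤ ((n : ℝ) + 1) * q ^ n / Real.sqrt n.factorial := by positivity
  have hterm' : (0:ℝ) ≤ ((n + 1 : ℕ) + 1 : ℝ) * q ^ (n+1) / Real.sqrt (n+1).factorial := by
    positivity
  rw [Real.norm_of_nonneg hterm', Real.norm_of_nonneg hterm]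
  have hs1 : Real.sqrt ((n+1).factorial) = Real.sqrt ((n:ℝ)+1) * Real.sqrt n.factorial := by
    rw [← Real.sqrt_mul (by positivity)]
    congr 1
    push_cast [Nat.factorial_succ]
    ring
  have h16 : 16 * q ^ 2 ≤ (n : ℝ) + 1 := by
    calc 16 * q ^ 2 ≤ (⌈16 * q ^ 2⌉₊ : ℝ) := Nat.le_ceil _
    _ ≤ (n : ℝ) := by exact_mod_cast hn
    _ ≤ (n : ℝ) + 1 := by linarith
  have h4q : 4 * q ≤ Real.sqrt ((n:ℝ)+1) := by
    rw [show (4:ℝ) * q = Real.sqrt ((4*q)^2) from (Real.sqrt_sq (by positivity)).symm]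
    apply Real.sqrt_le_sqrt
    nlinarith
  have hsp : (0:ℝ) < Real.sqrt ((n:ℝ)+1) := Real.sqrt_pos.2 (by positivity)
  rw [hs1, div_le_iff₀ (by positivity)]
  have key : ((n:ℝ) + 2) * q ≤ 1/2 * (((n:ℝ)+1) * Real.sqrt ((n:ℝ)+1)) := by
    have hsq : Real.sqrt ((n:ℝ)+1) * Real.sqrt ((n:ℝ)+1) = (n:ℝ)+1 :=
      Real.mul_self_sqrt (by positivity)
    nlinarith [hq, hsp.le, h4q]
  have hqn : (0:ℝ) ≤ q ^ n := by positivity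
  push_cast
  calc ((n:ℝ) + 1 + 1) * q ^ (n+1)
      = (((n:ℝ) + 2) * q) * q ^ n := by ring
    _ ≤ (1/2 * (((n:ℝ)+1) * Real.sqrt ((n:ℝ)+1))) * q ^ n := by
        apply mul_le_mul_of_nonneg_right key hqn
    _ = 1/2 * (((n:ℝ)+1) * q ^ n / Real.sqrt n.factorial) * (Real.sqrt ((n:ℝ)+1) * Real.sqrt n.factorial) := by
        field_simp


theorem lindblad_aux {E : Type*} [NormedAddCommGroup E] [NormedSpace ℂ E] [CompleteSpace E]
    (LA LB : E →L[ℂ] E) (ρ : ℕ → E) (C M : ℝ) (hC : 0 < C) (hM : 0 ≤ M)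
    (hbound : ∀ n : ℕ, ‖ρ n‖ ≤ M * C ^ n / Real.sqrt n.factorial)
    (hkey : ∀ n : ℕ, ((n : ℂ) + 1) • ρ (n + 1)
      = LA (ρ n) + (if n = 0 then 0 else LB (ρ (n - 1)))) :
    (∀ s : ℂ, Summable fun n : ℕ => ‖ρ n‖ * ‖s‖ ^ n) ∧
    (∀ z : ℂ, Summable fun n : ℕ => z ^ n • ρ n) ∧
    (∀ s : ℝ, HasDerivAt (fun x : ℝ => ∑' n : ℕ, (x : ℂ) ^ n • ρ n)
      (LA (∑' n : ℕ, (s : ℂ) ^ n • ρ n) + (s : ℂ) • LB (∑' n : ℕ, (s : ℂ) ^ n • ρ n)) s) := by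
  have hsq : ∀ n : ℕ, (0:ℝ) < Real.sqrt n.factorial :=
    fun n => Real.sqrt_pos.2 (by exact_mod_cast n.factorial_pos)
  have base : ∀ r : ℝ, 0 ≤ r →
      Summable (fun n : ℕ => ((n:ℝ)+1) * (C*r) ^ n / Real.sqrt n.factorial) :=
    fun r hr => aux_sum _ (mul_nonneg hC.le hr)
  have hb1 : ∀ r : ℝ, 0 ≤ r → ∀ n : ℕ,
      ‖ρ n‖ * r ^ n ≤ M * (((n:ℝ)+1) * (C*r) ^ n / Real.sqrt n.factorial) := by
    intro r hr n
    have hrn : (0:ℝ) ≤ r ^ n := by positivity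
    calc ‖ρ n‖ * r ^ n ≤ (M * C ^ n / Real.sqrt n.factorial) * r ^ n := by
          gcongr; exact hbound n
      _ = M * ((C*r) ^ n / Real.sqrt n.factorial) := by rw [mul_pow]; field_simp
      _ ≤ M * (((n:ℝ)+1) * (C*r) ^ n / Real.sqrt n.factorial) := by
          gcongr
          exact le_mul_of_one_le_left (by positivity) (by linarith [Nat.cast_nonneg (α := ℝ) n])
  have part1 : ∀ s : ℂ, Summable fun n : ℕ => ‖ρ n‖ * ‖s‖ ^ n := by
    intro s
    exact Summable.of_nonneg_of_le (fun n => by positivity) (hb1 ‖s‖ (norm_nonneg s))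
      ((base ‖s‖ (norm_nonneg s)).mul_left M)
  have hsumf : ∀ z : ℂ, Summable fun n : ℕ => z ^ n • ρ n := by
    intro z
    apply Summable.of_norm_bounded ((base ‖z‖ (norm_nonneg z)).mul_left M)
    intro n
    rw [norm_smul, norm_pow, mul_comm]
    exact hb1 ‖z‖ (norm_nonneg z) n
  refine ⟨part1, hsumf, ?_⟩
  intro s
  set R : ℝ := |s| + 1 with hR_def
  have hR1 : (1:ℝ) ≤ R := by rw [hR_def]; linarith [abs_nonneg s]
  have hR0 : (0:ℝ) < R := by linarith
  set u : ℕ → ℝ := fun n => (n:ℝ) * R ^ (n-1) * ‖ρ n‖ with hu_def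
  have hu_nonneg : ∀ n, 0 ≤ u n := fun n => by positivity
  have hus : Summable u := by
    rw [← summable_nat_add_iff 1]
    apply Summable.of_nonneg_of_le (fun n => hu_nonneg _) ?_ ((base R hR0.le).mul_left (M*C))
    intro n
    have h1 : u (n+1) = ((n:ℝ)+1) * R ^ n * ‖ρ (n+1)‖ := by
      simp [hu_def]
    rw [h1]
    have h2 : ‖ρ (n+1)‖ ≤ M * C ^ (n+1) / Real.sqrt n.factorial := by
      have hfle : Real.sqrt n.factorial ≤ Real.sqrt ((n+1).factorial) :=
        Real.sqrt_le_sqrt (by exact_mod_cast Nat.factorial_le (Nat.le_succ n))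
      refine (hbound (n+1)).trans ?_
      gcongr
    calc ((n:ℝ)+1) * R ^ n * ‖ρ (n+1)‖
        ≤ ((n:ℝ)+1) * R ^ n * (M * C ^ (n+1) / Real.sqrt n.factorial) := by
          gcongr
      _ = (M*C) * (((n:ℝ)+1) * (C*R) ^ n / Real.sqrt n.factorial) := by
          rw [mul_pow, pow_succ]
          field_simp
  have hmem : s ∈ Set.Ioo (-R) R := by
    constructor <;> [linarith [neg_abs_le s]; linarith [le_abs_self s]]
  have hderiv := hasDerivAt_tsum_of_isPreconnected hus (isOpen_Ioo (a := -R) (b := R))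
    (isPreconnected_Ioo)
    (g := fun n (x : ℝ) => (x:ℂ) ^ n • ρ n)
    (g' := fun n (x : ℝ) => (((n:ℂ)) * (x:ℂ) ^ (n-1)) • ρ n)
    (fun n y _ => by
      exact ((hasDerivAt_pow n ((y:ℂ))).comp_ofReal).smul_const (ρ n))
    (fun n y hy => by
      rw [norm_smul, norm_mul, Complex.norm_natCast, norm_pow, Complex.norm_real,
        Real.norm_eq_abs]
      have hyR : |y| ≤ R := by
        rw [abs_le]
        exact ⟨hy.1.le, hy.2.le⟩
      have : |y| ^ (n-1) ≤ R ^ (n-1) := pow_le_pow_left₀ (abs_nonneg y) hyR _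
      calc (n:ℝ) * |y| ^ (n-1) * ‖ρ n‖ ≤ (n:ℝ) * R ^ (n-1) * ‖ρ n‖ := by gcongr
        _ = u n := rfl)
    hmem (hsumf ((s:ℂ))) hmem
  -- now rewrite the derivative
  set z : ℂ := (s : ℂ) with hz_def
  have hs0 : Summable fun n : ℕ => z ^ n • ρ n := hsumf z
  have hsA : Summable fun n : ℕ => z ^ n • LA (ρ n) := by
    apply Summable.of_norm_bounded (((base ‖z‖ (norm_nonneg z)).mul_left M).mul_left ‖LA‖)
    intro n
    rw [norm_smul, norm_pow]
    calc ‖z‖ ^ n * ‖LA (ρ n)‖ ≤ ‖z‖ ^ n * (‖LA‖ * ‖ρ n‖) := by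
          gcongr; exact LA.le_opNorm _
      _ = ‖LA‖ * (‖ρ n‖ * ‖z‖ ^ n) := by ring
      _ ≤ ‖LA‖ * (M * (((n:ℝ)+1) * (C*‖z‖) ^ n / Real.sqrt n.factorial)) :=
          mul_le_mul_of_nonneg_left (hb1 ‖z‖ (norm_nonneg z) n) (norm_nonneg _)
  have hsB : Summable fun n : ℕ => z ^ n • LB (ρ n) := by
    apply Summable.of_norm_bounded (((base ‖z‖ (norm_nonneg z)).mul_left M).mul_left ‖LB‖)
    intro n
    rw [norm_smul, norm_pow]
    calc ‖z‖ ^ n * ‖LB (ρ n)‖ ≤ ‖z‖ ^ n * (‖LB‖ * ‖ρ n‖) := by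
          gcongr; exact LB.le_opNorm _
      _ = ‖LB‖ * (‖ρ n‖ * ‖z‖ ^ n) := by ring
      _ ≤ ‖LB‖ * (M * (((n:ℝ)+1) * (C*‖z‖) ^ n / Real.sqrt n.factorial)) :=
          mul_le_mul_of_nonneg_left (hb1 ‖z‖ (norm_nonneg z) n) (norm_nonneg _)
  have hsD : Summable fun n : ℕ => ((n:ℂ) * z ^ (n-1)) • ρ n := by
    apply Summable.of_norm_bounded hus
    intro n
    rw [norm_smul, norm_mul, Complex.norm_natCast, norm_pow]
    have hzR : ‖z‖ ≤ R := by
      rw [hz_def, Complex.norm_real, Real.norm_eq_abs]; linarith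
    calc (n:ℝ) * ‖z‖ ^ (n-1) * ‖ρ n‖ ≤ (n:ℝ) * R ^ (n-1) * ‖ρ n‖ := by
          gcongr
      _ = u n := rfl
  have hsIf : Summable fun n : ℕ => (if n = 0 then (0:E) else z ^ n • LB (ρ (n-1))) := by
    rw [← summable_nat_add_iff 1]
    have : (fun n : ℕ => (if n + 1 = 0 then (0:E) else z ^ (n+1) • LB (ρ (n+1-1))))
        = fun n : ℕ => z • (z ^ n • LB (ρ n)) := by
      funext n
      simp only [Nat.succ_ne_zero, if_false, Nat.add_sub_cancel]
      rw [pow_succ, mul_comm, mul_smul]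
    rw [this]
    exact hsB.const_smul z
  have key : (∑' n : ℕ, ((n:ℂ) * z ^ (n-1)) • ρ n)
      = LA (∑' n : ℕ, z ^ n • ρ n) + z • LB (∑' n : ℕ, z ^ n • ρ n) := by
    calc (∑' n : ℕ, ((n:ℂ) * z ^ (n-1)) • ρ n)
        = ∑' n : ℕ, (((n+1:ℕ):ℂ) * z ^ n) • ρ (n+1) := by
          rw [Summable.tsum_eq_zero_add hsD]
          simp only [Nat.cast_zero, zero_mul, zero_smul, zero_add, Nat.add_sub_cancel]
      _ = ∑' n : ℕ, (z ^ n • LA (ρ n) + (if n = 0 then 0 else z ^ n • LB (ρ (n-1)))) := by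
          congr 1
          funext n
          have h1 : (((n+1:ℕ):ℂ) * z ^ n) • ρ (n+1) = z ^ n • (((n:ℂ)+1) • ρ (n+1)) := by
            rw [smul_smul, mul_comm]
            push_cast
            ring_nf
          rw [h1, hkey n, smul_add]
          congr 1
          split_ifs with h
          · simp
          · rfl
      _ = (∑' n : ℕ, z ^ n • LA (ρ n))
          + ∑' n : ℕ, (if n = 0 then 0 else z ^ n • LB (ρ (n-1))) := Summable.tsum_add hsA hsIf
      _ = LA (∑' n : ℕ, z ^ n • ρ n) + z • LB (∑' n : ℕ, z ^ n • ρ n) := by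
          congr 1
          · simp_rw [← LA.map_smul]
            exact (LA.map_tsum hs0).symm
          · rw [Summable.tsum_eq_zero_add hsIf]
            simp only [reduceIte, zero_add, Nat.succ_ne_zero, if_false, Nat.add_sub_cancel]
            calc (∑' n : ℕ, z ^ (n+1) • LB (ρ n))
                = ∑' n : ℕ, z • (z ^ n • LB (ρ n)) := by
                  congr 1; funext n; rw [pow_succ, mul_comm, mul_smul]
              _ = z • ∑' n : ℕ, z ^ n • LB (ρ n) := Summable.tsum_const_smul z hsB
              _ = z • LB (∑' n : ℕ, z ^ n • ρ n) := by
                  congr 1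
                  simp_rw [← LB.map_smul]
                  exact (LB.map_tsum hs0).symm
  rw [key] at hderiv
  exact hderiv


lemma growth_bound (u : ℕ → ℝ) (a b M : ℝ)
    (ha : 0 ≤ a) (hb : 0 ≤ b) (hM : 0 ≤ M) (h0 : u 0 ≤ M) (h1 : u 1 ≤ a * M)
    (hrec : ∀ m : ℕ, u (m+2) ≤ a * u (m+1) + ((m:ℝ)+1) * (b * u m)) :
    ∀ n : ℕ, u n ≤ (a+b+1) ^ n * Real.sqrt n.factorial * M := by
  set C : ℝ := a + b + 1 with hC_def
  have hC1 : 1 ≤ C := by rw [hC_def]; linarith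
  have hC0 : 0 < C := by linarith
  have hsq : ∀ n : ℕ, (0:ℝ) < Real.sqrt n.factorial :=
    fun n => Real.sqrt_pos.2 (by exact_mod_cast n.factorial_pos)
  intro n
  induction n using Nat.strong_induction_on with
  | _ n ih =>
    match n with
    | 0 => simpa using h0
    | 1 =>
      calc u 1 ≤ a * M := h1
        _ ≤ C ^ 1 * Real.sqrt (Nat.factorial 1) * M := by
            simp only [pow_one, Nat.factorial_one, Nat.cast_one, Real.sqrt_one, mul_one]
            nlinarith
    | (m+2) =>
      have hm1 : u (m+1) ≤ C ^ (m+1) * Real.sqrt (m+1).factorial * M := ih (m+1) (by omega)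
      have hm0 : u m ≤ C ^ m * Real.sqrt m.factorial * M := ih m (by omega)
      have hum : 0 ≤ u m ∨ True := Or.inr trivial
      have hfacts : Real.sqrt ((m+1).factorial)
          = Real.sqrt ((m:ℝ)+1) * Real.sqrt m.factorial := by
        rw [← Real.sqrt_mul (by positivity)]
        congr 1
        push_cast [Nat.factorial_succ]
        ring
      have hfacts2 : Real.sqrt ((m+2).factorial)
          = Real.sqrt ((m:ℝ)+2) * Real.sqrt ((m+1).factorial) := by
        rw [← Real.sqrt_mul (by positivity)]
        congr 1
        push_cast [Nat.factorial_succ]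
        ring
      have hs1' : Real.sqrt ((m:ℝ)+1) ≤ (m:ℝ)+1 := by
        nth_rewrite 2 [show (m:ℝ)+1 = Real.sqrt (((m:ℝ)+1)^2) from
          (Real.sqrt_sq (by positivity)).symm]
        exact Real.sqrt_le_sqrt (by nlinarith [Nat.cast_nonneg (α := ℝ) m])
      have hs2 : Real.sqrt ((m:ℝ)+1) ≤ Real.sqrt ((m:ℝ)+2) :=
        Real.sqrt_le_sqrt (by linarith)
      have hsqm : Real.sqrt ((m:ℝ)+1) * Real.sqrt ((m:ℝ)+1) = (m:ℝ)+1 :=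
        Real.mul_self_sqrt (by positivity)
      have hsp : 0 ≤ Real.sqrt ((m:ℝ)+1) := Real.sqrt_nonneg _
      have key : a * C * Real.sqrt ((m:ℝ)+1) + ((m:ℝ)+1) * b
          ≤ C ^ 2 * (Real.sqrt ((m:ℝ)+2) * Real.sqrt ((m:ℝ)+1)) := by
        have e1 : a * C * Real.sqrt ((m:ℝ)+1) + ((m:ℝ)+1) * b ≤ ((m:ℝ)+1) * (a * C + b) := by
          have h' : a * C * Real.sqrt ((m:ℝ)+1) ≤ a * C * ((m:ℝ)+1) :=
            mul_le_mul_of_nonneg_left hs1' (by positivity)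
          nlinarith [Nat.cast_nonneg (α := ℝ) m]
        have e2 : ((m:ℝ)+1) * (a * C + b) ≤ ((m:ℝ)+1) * C ^ 2 := by
          apply mul_le_mul_of_nonneg_left _ (by positivity)
          nlinarith
        have e3 : ((m:ℝ)+1) * C ^ 2 ≤ C ^ 2 * (Real.sqrt ((m:ℝ)+2) * Real.sqrt ((m:ℝ)+1)) := by
          rw [mul_comm]
          apply mul_le_mul_of_nonneg_left _ (by positivity)
          calc (m:ℝ)+1 = Real.sqrt ((m:ℝ)+1) * Real.sqrt ((m:ℝ)+1) := hsqm.symm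
            _ ≤ Real.sqrt ((m:ℝ)+2) * Real.sqrt ((m:ℝ)+1) :=
                mul_le_mul_of_nonneg_right hs2 hsp
        linarith
      have humnn : u m ≤ C ^ m * Real.sqrt m.factorial * M := hm0
      calc u (m+2) ≤ a * u (m+1) + ((m:ℝ)+1) * (b * u m) := hrec m
        _ ≤ a * (C ^ (m+1) * Real.sqrt (m+1).factorial * M)
            + ((m:ℝ)+1) * (b * (C ^ m * Real.sqrt m.factorial * M)) := by
            have g1 : a * u (m+1) ≤ a * (C ^ (m+1) * Real.sqrt (m+1).factorial * M) :=
              mul_le_mul_of_nonneg_left hm1 ha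
            have g2 : b * u m ≤ b * (C ^ m * Real.sqrt m.factorial * M) :=
              mul_le_mul_of_nonneg_left hm0 hb
            have g3 : ((m:ℝ)+1) * (b * u m)
                ≤ ((m:ℝ)+1) * (b * (C ^ m * Real.sqrt m.factorial * M)) :=
              mul_le_mul_of_nonneg_left g2 (by positivity)
            linarith
        _ ≤ C ^ (m+2) * Real.sqrt ((m+2).factorial) * M := by
            rw [hfacts2, hfacts]
            have expand : a * (C ^ (m+1) * (Real.sqrt ((m:ℝ)+1) * Real.sqrt m.factorial) * M)
                + ((m:ℝ)+1) * (b * (C ^ m * Real.sqrt m.factorial * M))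
                = (a * C * Real.sqrt ((m:ℝ)+1) + ((m:ℝ)+1) * b)
                  * (C ^ m * Real.sqrt m.factorial * M) := by
              ring
            have expand2 : C ^ (m+2) * (Real.sqrt ((m:ℝ)+2)
                  * (Real.sqrt ((m:ℝ)+1) * Real.sqrt m.factorial)) * M
                = (C ^ 2 * (Real.sqrt ((m:ℝ)+2) * Real.sqrt ((m:ℝ)+1)))
                  * (C ^ m * Real.sqrt m.factorial * M) := by
              ring
            rw [hfacts, hfacts2] at *
            rw [expand, expand2]
            exact mul_le_mul_of_nonneg_right key (by positivity)


set_option maxHeartbeats 1000000 in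
/-- With `Q 0 = I`, `Q 1 = 𝓛_A`, `Q (n+1) = 𝓛_A ∘ Q n + n 𝓛_B ∘ Q (n-1)`
for `n ≥ 1`, and `ρ n = (1/n!) Q n (ρ₀)`, the series `∑ ρ n sⁿ` converges absolutely for
every `s : ℂ` (with respect to the Hilbert–Schmidt norm), and its sum, as a function of
real `s`, satisfies `ρ(0) = ρ₀` and the master equation `dρ/ds = 𝓛_A(ρ(s)) + s 𝓛_B(ρ(s))`. -/
theorem stmt_10 {K : ℕ} (A B L : Matrix (Fin K) (Fin K) ℂ) (T : ℝ) (hT : 0 ≤ T)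
    (ρ₀ : Matrix (Fin K) (Fin K) ℂ)
    (Q : ℕ → (Matrix (Fin K) (Fin K) ℂ →ₗ[ℂ] Matrix (Fin K) (Fin K) ℂ))
    (hQ0 : Q 0 = LinearMap.id) (hQ1 : Q 1 = lindbladA A L T)
    (hQrec : ∀ n : ℕ, 1 ≤ n →
      Q (n + 1) = (lindbladA A L T) ∘ₗ Q n + (n : ℂ) • ((lindbladB B) ∘ₗ Q (n - 1)))
    (ρ : ℕ → Matrix (Fin K) (Fin K) ℂ)
    (hρ : ∀ n : ℕ, ρ n = ((n.factorial : ℂ))⁻¹ • Q n ρ₀) :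
    (∀ s : ℂ, Summable fun n : ℕ => ‖ρ n‖ * ‖s‖ ^ n) ∧
    (∀ f : ℝ → Matrix (Fin K) (Fin K) ℂ, f = (fun s : ℝ => ∑' n : ℕ, (s : ℂ) ^ n • ρ n) →
      f 0 = ρ₀ ∧
      ∀ s : ℝ, HasDerivAt f (lindbladA A L T (f s) + (s : ℂ) • lindbladB B (f s)) s) := by
  obtain ⟨LA, hLA⟩ : ∃ LA : Matrix (Fin K) (Fin K) ℂ →L[ℂ] Matrix (Fin K) (Fin K) ℂ,
      ∀ x, lindbladA A L T x = LA x :=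
    ⟨LinearMap.toContinuousLinearMap (lindbladA A L T), fun x =>
      (congrFun (LinearMap.coe_toContinuousLinearMap' (lindbladA A L T)) x).symm⟩
  obtain ⟨LB, hLB⟩ : ∃ LB : Matrix (Fin K) (Fin K) ℂ →L[ℂ] Matrix (Fin K) (Fin K) ℂ,
      ∀ x, lindbladB B x = LB x :=
    ⟨LinearMap.toContinuousLinearMap (lindbladB B), fun x =>
      (congrFun (LinearMap.coe_toContinuousLinearMap' (lindbladB B)) x).symm⟩
  letI : SeminormedAddCommGroup (Matrix (Fin K) (Fin K) ℂ →L[ℂ] Matrix (Fin K) (Fin K) ℂ) :=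
    ContinuousLinearMap.toSeminormedAddCommGroup
  -- the growth bound
  have hbd : ∀ n : ℕ, ‖Q n ρ₀‖ ≤ (‖LA‖ + ‖LB‖ + 1) ^ n * Real.sqrt n.factorial * ‖ρ₀‖ := by
    apply growth_bound (fun n => ‖Q n ρ₀‖) ‖LA‖ ‖LB‖ ‖ρ₀‖
      (norm_nonneg _) (norm_nonneg _) (norm_nonneg _)
    · rw [hQ0]; exact le_rfl
    · rw [hQ1, hLA]; exact LA.le_opNorm ρ₀
    · intro m
      have hrec := hQrec (m+1) (by omega)
      have hm1 : (m + 1) - 1 = m := by omega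
      rw [hm1] at hrec
      have happ : Q (m+2) ρ₀ = LA (Q (m+1) ρ₀) + ((m+1 : ℕ) : ℂ) • LB (Q m ρ₀) := by
        rw [show m + 2 = (m+1) + 1 from rfl, hrec]
        rw [LinearMap.add_apply, LinearMap.smul_apply, LinearMap.comp_apply,
          LinearMap.comp_apply, hLA, hLB]
      calc ‖Q (m+2) ρ₀‖ = ‖LA (Q (m+1) ρ₀) + ((m+1 : ℕ) : ℂ) • LB (Q m ρ₀)‖ := by rw [happ]
        _ ≤ ‖LA (Q (m+1) ρ₀)‖ + ‖((m+1 : ℕ) : ℂ) • LB (Q m ρ₀)‖ := norm_add_le _ _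
        _ = ‖LA (Q (m+1) ρ₀)‖ + ((m+1 : ℕ) : ℝ) * ‖LB (Q m ρ₀)‖ := by
            rw [norm_smul, Complex.norm_natCast]
        _ ≤ ‖LA‖ * ‖Q (m+1) ρ₀‖ + ((m:ℝ)+1) * (‖LB‖ * ‖Q m ρ₀‖) := by
            have g1 : ‖LA (Q (m+1) ρ₀)‖ ≤ ‖LA‖ * ‖Q (m+1) ρ₀‖ := LA.le_opNorm (Q (m+1) ρ₀)
            have g2 : ((m+1 : ℕ) : ℝ) * ‖LB (Q m ρ₀)‖
                ≤ ((m+1 : ℕ) : ℝ) * (‖LB‖ * ‖Q m ρ₀‖) :=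
              mul_le_mul_of_nonneg_left (LB.le_opNorm _) (by positivity)
            push_cast at g2 ⊢
            linarith
  set C : ℝ := ‖LA‖ + ‖LB‖ + 1 with hC_def
  have hC0 : 0 < C := by
    have h1 := norm_nonneg LA; have h2 := norm_nonneg LB; rw [hC_def]; linarith
  have hbound : ∀ n : ℕ, ‖ρ n‖ ≤ ‖ρ₀‖ * C ^ n / Real.sqrt n.factorial := by
    intro n
    have hsqn : (0:ℝ) < Real.sqrt n.factorial :=
      Real.sqrt_pos.2 (by exact_mod_cast n.factorial_pos)
    rw [hρ n, norm_smul, norm_inv, Complex.norm_natCast]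
    have hfac : (n.factorial : ℝ) = Real.sqrt n.factorial * Real.sqrt n.factorial :=
      (Real.mul_self_sqrt (by positivity)).symm
    calc (n.factorial : ℝ)⁻¹ * ‖Q n ρ₀‖
        ≤ (n.factorial : ℝ)⁻¹ * (C ^ n * Real.sqrt n.factorial * ‖ρ₀‖) := by
          apply mul_le_mul_of_nonneg_left (hbd n) (by positivity)
      _ = ‖ρ₀‖ * C ^ n / Real.sqrt n.factorial := by
          field_simp
          conv_rhs => rw [hfac]
          ring
  -- the key recursion for ρ
  have hkey : ∀ n : ℕ, ((n : ℂ) + 1) • ρ (n + 1)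
      = LA (ρ n) + (if n = 0 then 0 else LB (ρ (n - 1))) := by
    intro n
    match n with
    | 0 =>
      simp only [Nat.cast_zero, zero_add, if_pos rfl, add_zero, one_smul]
      rw [hρ 1, hρ 0, hQ1, hQ0, hLA]
      simp
    | (m+1) =>
      have hrec := hQrec (m+1) (by omega)
      have hm1 : (m + 1) - 1 = m := by omega
      rw [hm1] at hrec
      simp only [Nat.succ_ne_zero, if_false, Nat.add_sub_cancel]
      have happ : Q (m+2) ρ₀ = LA (Q (m+1) ρ₀) + ((m+1 : ℕ) : ℂ) • LB (Q m ρ₀) := by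
        rw [show m + 2 = (m+1) + 1 from rfl, hrec]
        rw [LinearMap.add_apply, LinearMap.smul_apply, LinearMap.comp_apply,
          LinearMap.comp_apply, hLA, hLB]
      rw [hρ (m+2), hρ (m+1), hρ m, happ, LA.map_smul, LB.map_smul]
      have h1 : (((m+1).factorial : ℕ) : ℂ) = ((m:ℂ)+1) * ((m.factorial : ℕ) : ℂ) := by
        push_cast [Nat.factorial_succ]
        ring
      have h2 : (((m+2).factorial : ℕ) : ℂ)
          = ((m:ℂ)+2) * (((m:ℂ)+1) * ((m.factorial : ℕ) : ℂ)) := by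
        push_cast [Nat.factorial_succ]
        ring
      rw [h1, h2]
      have f0 : ((m.factorial : ℕ) : ℂ) ≠ 0 := Nat.cast_ne_zero.2 m.factorial_ne_zero
      have f1 : (m:ℂ) + 1 ≠ 0 := by
        have : ((m+1 : ℕ) : ℂ) ≠ 0 := Nat.cast_ne_zero.2 (by omega)
        push_cast at this
        exact this
      have f2 : (m:ℂ) + 2 ≠ 0 := by
        have : ((m+2 : ℕ) : ℂ) ≠ 0 := Nat.cast_ne_zero.2 (by omega)
        push_cast at this
        exact this
      push_cast
      match_scalars <;> (field_simp; try ring)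
  obtain ⟨part1, hsumf, hderiv⟩ :=
    lindblad_aux LA LB ρ C ‖ρ₀‖ hC0 (norm_nonneg _) hbound hkey
  refine ⟨part1, ?_⟩
  intro f hf
  subst hf
  constructor
  · have hz : ∀ n : ℕ, n ≠ 0 → (((0:ℝ) : ℂ)) ^ n • ρ n = 0 := by
      intro n hn
      rw [Complex.ofReal_zero, zero_pow hn, zero_smul]
    have hbeta : (fun s : ℝ => ∑' n : ℕ, (s:ℂ) ^ n • ρ n) 0
        = ∑' n : ℕ, (((0:ℝ):ℂ)) ^ n • ρ n := rfl
    rw [hbeta, tsum_eq_single 0 hz]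
    rw [hρ 0, hQ0]
    simp
  · intro s
    rw [hLA, hLB]
    exact hderiv s
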